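/- arXiv:0807.5035 — 2 statements merged into one kernel-verified Lean document; each statement's English description precedes it below -/
import Mathlib

section
/- Let W be a real random variable. Then W has the standard normal distribution N(0,1) if and only if E[f′(W) − W f(W)] = 0 for every continuous, piecewise continuously differentiable function f with E|f′(X)| < ∞, where X ~ N(0,1). -/
open MeasureTheory ProbabilityTheory Real Set Filter Topology
open scoped NNReal ENNReal

/-- A function `f : ℝ → ℝ` is continuous and piecewise continuously
differentiable: it is continuous everywhere and, outside a finite set of
points, differentiable with continuous derivative. -/
def PiecewiseC1 (f : ℝ → ℝ) : Prop :=
  Continuous f ∧ ∃ S : Set ℝ, S.Finite ∧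
    ∀ x ∉ S, DifferentiableAt ℝ f x ∧ ContinuousAt (deriv f) x

namespace SteinAux

/-- The standard gaussian density. -/
noncomputable def phi (x : ℝ) : ℝ := (Real.sqrt (2 * π))⁻¹ * Real.exp (-x ^ 2 / 2)

lemma phi_eq : phi = gaussianPDFReal 0 1 := by
  ext x
  simp [phi, gaussianPDFReal]

lemma phi_pos (x : ℝ) : 0 < phi x := by
  have : (0:ℝ) < Real.sqrt (2 * π) := Real.sqrt_pos.2 (by positivity)
  unfold phi; positivity

lemma phi_nonneg (x : ℝ) : 0 ≤ phi x := (phi_pos x).le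

lemma continuous_phi : Continuous phi := by
  unfold phi; fun_prop

lemma integrable_phi : Integrable phi := by
  rw [phi_eq]; exact integrable_gaussianPDFReal 0 1

lemma integral_phi : ∫ x, phi x = 1 := by
  rw [phi_eq]; exact integral_gaussianPDFReal_eq_one 0 one_ne_zero

lemma hasDerivAt_phi (x : ℝ) : HasDerivAt phi (-(x * phi x)) x := by
  have h1 : HasDerivAt (fun x : ℝ => -x ^ 2 / 2) (-x) x := by
    have := ((hasDerivAt_pow 2 x).neg).div_const 2
    simpa using this.congr_deriv (by ring)
  have h2 := (h1.exp).const_mul (Real.sqrt (2 * π))⁻¹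
  unfold phi
  exact h2.congr_deriv (by ring)

lemma sq_tendsto_atBot : Tendsto (fun x : ℝ => -x ^ 2 / 2) atBot atBot := by
  apply Tendsto.atBot_div_const two_pos
  apply tendsto_neg_atTop_atBot.comp
  have h := (tendsto_pow_atTop (two_ne_zero (α := ℕ))).comp
    (tendsto_neg_atBot_atTop (G := ℝ))
  exact h.congr fun x => by simp [Function.comp, neg_sq]

lemma sq_tendsto_atTop : Tendsto (fun x : ℝ => -x ^ 2 / 2) atTop atBot := by
  apply Tendsto.atBot_div_const two_pos
  exact tendsto_neg_atTop_atBot.comp (tendsto_pow_atTop (two_ne_zero (α := ℕ)))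

lemma tendsto_phi_atTop : Tendsto phi atTop (𝓝 0) := by
  have h := (Real.tendsto_exp_atBot.comp sq_tendsto_atTop).const_mul (Real.sqrt (2 * π))⁻¹
  rw [mul_zero] at h
  exact h

lemma tendsto_phi_atBot : Tendsto phi atBot (𝓝 0) := by
  have h := (Real.tendsto_exp_atBot.comp sq_tendsto_atBot).const_mul (Real.sqrt (2 * π))⁻¹
  rw [mul_zero] at h
  exact h

lemma phi_even (x : ℝ) : phi (-x) = phi x := by
  simp [phi]

/-- The standard gaussian measure is Lebesgue with density `phi`. -/
lemma gaussian_eq : (gaussianReal 0 1 : Measure ℝ)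
    = volume.withDensity (fun x => ENNReal.ofReal (phi x)) := by
  rw [gaussianReal_of_var_ne_zero 0 one_ne_zero]
  congr 1
  ext x
  rw [gaussianPDF, ← phi_eq]

lemma density_eq : (fun x => ENNReal.ofReal (phi x))
    = (fun x => (((phi x).toNNReal : ℝ≥0) : ℝ≥0∞)) := rfl

lemma measurable_phi_toNNReal : Measurable (fun y => (phi y).toNNReal) :=
  continuous_phi.measurable.real_toNNReal

/-- Transfer of integrals from the gaussian measure to Lebesgue measure. -/
lemma integral_gaussian_eq (g : ℝ → ℝ) :
    ∫ x, g x ∂(gaussianReal 0 1) = ∫ x, g x * phi x := by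
  rw [gaussian_eq, density_eq, integral_withDensity_eq_integral_smul measurable_phi_toNNReal]
  congr 1
  ext x
  simp [NNReal.smul_def, Real.coe_toNNReal _ (phi_nonneg x), mul_comm]

lemma integrable_gaussian_iff {g : ℝ → ℝ} :
    Integrable g (gaussianReal 0 1) ↔ Integrable (fun x => g x * phi x) volume := by
  rw [gaussian_eq, density_eq, integrable_withDensity_iff_integrable_smul measurable_phi_toNNReal]
  constructor <;> intro h <;> refine h.congr (Eventually.of_forall fun x => ?_) <;>
    simp [NNReal.smul_def, Real.coe_toNNReal _ (phi_nonneg x), mul_comm]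

/-- FTC-2 with a finite exceptional set. -/
lemma ftc_finset (S : Finset ℝ) {g g' : ℝ → ℝ} {a b : ℝ} (hab : a ≤ b)
    (hc : Continuous g)
    (hd : ∀ x ∈ Ioo a b, x ∉ S → HasDerivAt g (g' x) x)
    (hint : IntervalIntegrable g' volume a b) :
    ∫ y in a..b, g' y = g b - g a := by
  induction S using Finset.strongInduction generalizing a b with
  | _ S ih =>
    by_cases hS : ∃ c ∈ S, c ∈ Ioo a b
    · obtain ⟨c, hcS, hc1, hc2⟩ := hS
      have hsub1 : uIcc a c ⊆ uIcc a b := uIcc_subset_uIcc left_mem_uIcc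
        (by rw [uIcc_of_le hab]; exact ⟨hc1.le, hc2.le⟩)
      have hsub2 : uIcc c b ⊆ uIcc a b := uIcc_subset_uIcc
        (by rw [uIcc_of_le hab]; exact ⟨hc1.le, hc2.le⟩) right_mem_uIcc
      have h1 : IntervalIntegrable g' volume a c := hint.mono_set hsub1
      have h2 : IntervalIntegrable g' volume c b := hint.mono_set hsub2
      have e1 := ih (S.erase c) (Finset.erase_ssubset hcS) hc1.le
        (fun x hx hxe => hd x ⟨hx.1, hx.2.trans hc2⟩
          (fun hxS => hxe (Finset.mem_erase.2 ⟨ne_of_lt hx.2, hxS⟩))) h1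
      have e2 := ih (S.erase c) (Finset.erase_ssubset hcS) hc2.le
        (fun x hx hxe => hd x ⟨hc1.trans hx.1, hx.2⟩
          (fun hxS => hxe (Finset.mem_erase.2 ⟨ne_of_gt hx.1, hxS⟩))) h2
      rw [← intervalIntegral.integral_add_adjacent_intervals h1 h2, e1, e2]
      ring
    · push_neg at hS
      exact intervalIntegral.integral_eq_sub_of_hasDerivAt_of_le hab hc.continuousOn
        (fun x hx => hd x hx (fun hxS => hS x hxS hx)) hint

/-- A continuous function with integrable derivative (off a finite set) and integrable
`x * g x` has integral of derivative zero. -/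
lemma integral_deriv_eq_zero (S : Finset ℝ) {g g' : ℝ → ℝ}
    (hc : Continuous g)
    (hd : ∀ x, x ∉ S → HasDerivAt g (g' x) x)
    (hint : Integrable g' volume)
    (hxg : Integrable (fun x => x * g x) volume) :
    ∫ x, g' x = 0 := by
  have key : ∀ a b : ℝ, a ≤ b → ∫ y in a..b, g' y = g b - g a := fun a b hab =>
    ftc_finset S hab hc (fun x _ hxS => hd x hxS) hint.intervalIntegrable
  -- limits of g at ±∞ exist
  have htop : Tendsto g atTop (𝓝 (g 0 + ∫ x in Ioi (0:ℝ), g' x)) := by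
    have t1 := intervalIntegral_tendsto_integral_Ioi 0 hint.integrableOn tendsto_id
    have t2 : Tendsto (fun b : ℝ => g 0 + ∫ y in (0:ℝ)..b, g' y) atTop
        (𝓝 (g 0 + ∫ x in Ioi (0:ℝ), g' x)) := tendsto_const_nhds.add t1
    refine t2.congr' ?_
    filter_upwards [eventually_ge_atTop (0:ℝ)] with b hb
    rw [key 0 b hb]; ring
  have hbot : Tendsto g atBot (𝓝 (g 0 - ∫ x in Iic (0:ℝ), g' x)) := by
    have t1 := intervalIntegral_tendsto_integral_Iic 0 hint.integrableOn tendsto_id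
    have t2 : Tendsto (fun a : ℝ => g 0 - ∫ y in a..(0:ℝ), g' y) atBot
        (𝓝 (g 0 - ∫ x in Iic (0:ℝ), g' x)) := tendsto_const_nhds.sub t1
    refine t2.congr' ?_
    filter_upwards [eventually_le_atBot (0:ℝ)] with a ha
    rw [key a 0 ha]; ring
  -- the limits must be zero
  have hzero_top : ∀ L, Tendsto g atTop (𝓝 L) → L = 0 := by
    intro L hL
    by_contra hL0
    have habs : Tendsto (fun x => |g x|) atTop (𝓝 |L|) := hL.abs
    have hev : ∀ᶠ x in atTop, |L| / 2 ≤ |g x| :=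
      habs.eventually (eventually_ge_nhds (half_lt_self (abs_pos.2 hL0)))
    obtain ⟨A, hA⟩ := (hev.and (eventually_ge_atTop (1:ℝ))).exists_forall_of_atTop
    have hconst : Integrable (fun _ : ℝ => |L| / 2) (volume.restrict (Ioi (max A 1))) := by
      refine Integrable.mono' (hxg.abs.restrict (s := Ioi (max A 1)))
        aestronglyMeasurable_const ?_
      rw [ae_restrict_iff' measurableSet_Ioi]
      refine Eventually.of_forall fun x hx => ?_
      have hx1 : (1:ℝ) ≤ x := le_trans (le_max_right A 1) (le_of_lt hx)
      have hxA : A ≤ x := le_trans (le_max_left A 1) (le_of_lt hx)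
      have h1 := (hA x hxA).1
      have : |L| / 2 ≤ |g x| := h1
      calc ‖|L| / 2‖ = |L| / 2 := by rw [Real.norm_eq_abs]; exact abs_of_nonneg (by positivity)
        _ ≤ |g x| := this
        _ ≤ x * |g x| := le_mul_of_one_le_left (abs_nonneg _) hx1
        _ = |x * g x| := by
              rw [abs_mul, abs_of_nonneg (show (0:ℝ) ≤ x by linarith)]
    rw [integrable_const_iff] at hconst
    rcases hconst with h | h
    · have : |L| = 0 := by
        have := (div_eq_zero_iff.1 h).resolve_right two_ne_zero
        linarith [abs_nonneg L]
      exact hL0 (abs_eq_zero.1 this)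
    · have h := h.measure_univ_lt_top
      simp [Measure.restrict_apply_univ, Real.volume_Ioi] at h
  have hzero_bot : ∀ L, Tendsto g atBot (𝓝 L) → L = 0 := by
    intro L hL
    by_contra hL0
    have habs : Tendsto (fun x => |g x|) atBot (𝓝 |L|) := hL.abs
    have hev : ∀ᶠ x in atBot, |L| / 2 ≤ |g x| :=
      habs.eventually (eventually_ge_nhds (half_lt_self (abs_pos.2 hL0)))
    obtain ⟨A, hA⟩ := (hev.and (eventually_le_atBot (-1:ℝ))).exists_forall_of_atBot
    have hconst : Integrable (fun _ : ℝ => |L| / 2) (volume.restrict (Iio (min A (-1)))) := by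
      refine Integrable.mono' (hxg.abs.restrict (s := Iio (min A (-1))))
        aestronglyMeasurable_const ?_
      rw [ae_restrict_iff' measurableSet_Iio]
      refine Eventually.of_forall fun x hx => ?_
      have hx1 : x ≤ -1 := le_of_lt (lt_of_lt_of_le hx (min_le_right A (-1)))
      have hxA : x ≤ A := le_of_lt (lt_of_lt_of_le hx (min_le_left A (-1)))
      have h1 := (hA x hxA).1
      calc ‖|L| / 2‖ = |L| / 2 := by rw [Real.norm_eq_abs]; exact abs_of_nonneg (by positivity)
        _ ≤ |g x| := h1
        _ ≤ (-x) * |g x| := le_mul_of_one_le_left (abs_nonneg _) (by linarith)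
        _ = |x * g x| := by
              rw [abs_mul, abs_of_nonpos (show x ≤ (0:ℝ) by linarith)]
    rw [integrable_const_iff] at hconst
    rcases hconst with h | h
    · have : |L| = 0 := by
        have := (div_eq_zero_iff.1 h).resolve_right two_ne_zero
        linarith [abs_nonneg L]
      exact hL0 (abs_eq_zero.1 this)
    · have h := h.measure_univ_lt_top
      simp [Measure.restrict_apply_univ, Real.volume_Iio] at h
  have hLtop := hzero_top _ htop
  have hLbot := hzero_bot _ hbot
  -- conclude
  have hmain : Tendsto (fun n : ℝ => ∫ y in (-n)..n, g' y) atTop (𝓝 (∫ x, g' x)) :=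
    intervalIntegral_tendsto_integral hint tendsto_neg_atTop_atBot tendsto_id
  have hmain2 : Tendsto (fun n : ℝ => ∫ y in (-n)..n, g' y) atTop (𝓝 0) := by
    have : Tendsto (fun n : ℝ => g n - g (-n)) atTop (𝓝 0) := by
      have h2 := (htop.sub (hbot.comp tendsto_neg_atTop_atBot))
      rw [hLtop, hLbot, sub_zero] at h2
      exact h2
    refine this.congr' ?_
    filter_upwards [eventually_ge_atTop (0:ℝ)] with n hn
    rw [key (-n) n (by linarith)]
  exact tendsto_nhds_unique hmain hmain2

/-- Stein identity for the gaussian measure. -/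
lemma stein_identity {f : ℝ → ℝ} (hf : _root_.PiecewiseC1 f)
    (hint : Integrable (fun x => deriv f x) (gaussianReal 0 1))
    (hxf : Integrable (fun x => x * f x) (gaussianReal 0 1)) :
    ∫ x, (deriv f x - x * f x) ∂(gaussianReal 0 1) = 0 := by
  obtain ⟨hcont, S, hSfin, hSd⟩ := hf
  have hd : ∀ x, x ∉ hSfin.toFinset →
      HasDerivAt (fun y => f y * phi y) (deriv f x * phi x - x * f x * phi x) x := by
    intro x hx
    rw [Set.Finite.mem_toFinset] at hx
    have hder : HasDerivAt f (deriv f x) x := ((hSd x hx).1).hasDerivAt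
    exact (hder.mul (hasDerivAt_phi x)).congr_deriv (by ring)
  have hint1 : Integrable (fun x => deriv f x * phi x) volume := integrable_gaussian_iff.1 hint
  have hint2 : Integrable (fun x => (x * f x) * phi x) volume := integrable_gaussian_iff.1 hxf
  have hint' : Integrable (fun x => deriv f x * phi x - x * f x * phi x) volume := by
    refine (hint1.sub hint2).congr (Eventually.of_forall fun x => ?_)
    simp [Pi.sub_apply]
  have hxg : Integrable (fun x => x * (f x * phi x)) volume := by
    refine hint2.congr (Eventually.of_forall fun x => ?_)
    ring
  have hzero := integral_deriv_eq_zero hSfin.toFinset (hcont.mul continuous_phi) hd hint' hxg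
  rw [integral_gaussian_eq]
  rw [← hzero]
  congr 1
  ext x
  ring

/-- Gaussian upper tail integral of `t * phi t`. -/
lemma negphi_deriv (t : ℝ) : HasDerivAt (fun y => -phi y) (t * phi t) t :=
  (hasDerivAt_phi t).neg.congr_deriv (by ring)

lemma negphi_tendsto : Tendsto (fun y => -phi y) atTop (𝓝 0) := by
  have := tendsto_phi_atTop.neg
  simpa using this

lemma integral_mul_phi_Ioi {x : ℝ} (hx : 0 ≤ x) :
    ∫ t in Ioi x, t * phi t = phi x := by
  have h := integral_Ioi_of_hasDerivAt_of_nonneg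
    ((continuous_phi.neg).continuousWithinAt)
    (fun t ht => negphi_deriv t)
    (fun t ht => mul_nonneg (le_trans hx (le_of_lt ht)) (phi_nonneg t))
    negphi_tendsto
  simpa using h

lemma integrableOn_mul_phi_Ioi {x : ℝ} (hx : 0 ≤ x) :
    IntegrableOn (fun t => t * phi t) (Ioi x) := by
  exact integrableOn_Ioi_deriv_of_nonneg
    ((continuous_phi.neg).continuousWithinAt)
    (fun t ht => negphi_deriv t)
    (fun t ht => mul_nonneg (le_trans hx (le_of_lt ht)) (phi_nonneg t))
    negphi_tendsto

/-- Gaussian tail bound. -/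
lemma tail_bound_Ioi {x : ℝ} (hx : 0 < x) : ∫ t in Ioi x, phi t ≤ phi x / x := by
  have hmono : ∫ t in Ioi x, phi t ≤ ∫ t in Ioi x, x⁻¹ * (t * phi t) := by
    refine setIntegral_mono_on (integrable_phi.integrableOn)
      ((integrableOn_mul_phi_Ioi hx.le).const_mul x⁻¹) measurableSet_Ioi ?_
    intro t ht
    have h1 : x * phi t ≤ t * phi t := mul_le_mul_of_nonneg_right (le_of_lt ht) (phi_nonneg t)
    calc phi t = x⁻¹ * (x * phi t) := by field_simp
      _ ≤ x⁻¹ * (t * phi t) := by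
          exact mul_le_mul_of_nonneg_left h1 (inv_nonneg.2 hx.le)
  rw [integral_const_mul, integral_mul_phi_Ioi hx.le] at hmono
  rw [div_eq_inv_mul]
  exact hmono

lemma integral_phi_Iic_eq {x : ℝ} : ∫ t in Iic x, phi t = ∫ t in Ioi (-x), phi t := by
  have h := integral_comp_neg_Ioi (c := -x) (f := phi)
  rw [neg_neg] at h
  rw [← h]
  refine setIntegral_congr_fun measurableSet_Ioi fun t _ => ?_
  rw [phi_even]

lemma tail_bound_Iic {x : ℝ} (hx : x < 0) : ∫ t in Iic x, phi t ≤ phi x / (-x) := by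
  rw [integral_phi_Iic_eq]
  have := tail_bound_Ioi (x := -x) (by linarith)
  rwa [phi_even] at this

lemma hasDerivAt_integral_Iic {ψ : ℝ → ℝ} (hcont : Continuous ψ) (hint : Integrable ψ)
    (x : ℝ) : HasDerivAt (fun y => ∫ t in Iic y, ψ t) (ψ x) x := by
  have key : ∀ y : ℝ, ∫ t in Iic y, ψ t = (∫ t in Iic (0:ℝ), ψ t) + ∫ t in (0:ℝ)..y, ψ t := by
    intro y
    have h2 := intervalIntegral.integral_Iic_sub_Iic (hint.integrableOn (s := Iic 0))
      (hint.integrableOn (s := Iic y))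
    linarith
  have hd : HasDerivAt (fun y : ℝ => (∫ t in Iic (0:ℝ), ψ t) + ∫ t in (0:ℝ)..y, ψ t)
      (ψ x) x := by
    apply HasDerivAt.const_add
    exact intervalIntegral.integral_hasDerivAt_right hint.intervalIntegrable
      hcont.aestronglyMeasurable.stronglyMeasurableAtFilter hcont.continuousAt
  exact hd.congr_of_eventuallyEq (Eventually.of_forall key)

/-- Solution of the Stein equation for a bounded continuous function `h`. -/
lemma stein_solution {h : ℝ → ℝ} (hcon : Continuous h) {C : ℝ} (hC : ∀ x, |h x| ≤ C) :
    ∃ f : ℝ → ℝ, _root_.PiecewiseC1 f ∧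
      Integrable (fun x => deriv f x) (gaussianReal 0 1) ∧
      ∀ x, deriv f x - x * f x = h x - ∫ t, h t ∂(gaussianReal 0 1) := by
  set c := ∫ t, h t ∂(gaussianReal 0 1) with hc
  set D := C + |c| with hD
  have hD0 : 0 ≤ D := by
    have := hC 0
    have := abs_nonneg (h 0)
    have := abs_nonneg c
    rw [hD]; linarith
  have hbound : ∀ t, |h t - c| ≤ D := by
    intro t
    rw [hD]
    calc |h t - c| ≤ |h t| + |c| := abs_sub _ _
      _ ≤ C + |c| := add_le_add_left (hC t) _
  set ψ : ℝ → ℝ := fun t => (h t - c) * phi t with hψ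
  have hψcont : Continuous ψ := (hcon.sub continuous_const).mul continuous_phi
  have hψabs : ∀ t, |ψ t| ≤ D * phi t := by
    intro t
    rw [hψ]
    simp only
    rw [abs_mul, abs_of_nonneg (phi_nonneg t)]
    exact mul_le_mul_of_nonneg_right (hbound t) (phi_nonneg t)
  have hψint : Integrable ψ := by
    refine Integrable.mono' (integrable_phi.const_mul D) hψcont.aestronglyMeasurable
      (Eventually.of_forall fun t => ?_)
    rw [Real.norm_eq_abs]
    exact hψabs t
  have hhint : Integrable h (gaussianReal 0 1) := by
    refine Integrable.mono' (integrable_const C) hcon.aestronglyMeasurable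
      (Eventually.of_forall fun t => ?_)
    rw [Real.norm_eq_abs]; exact hC t
  have hψtotal : ∫ t, ψ t = 0 := by
    have h1 : ∫ t, ψ t = ∫ t, (h t - c) ∂(gaussianReal 0 1) :=
      (integral_gaussian_eq (fun t => h t - c)).symm
    rw [h1, integral_sub hhint (integrable_const c), integral_const]
    simp [← hc]
  -- the Stein solution
  set f : ℝ → ℝ := fun x => (∫ t in Iic x, ψ t) / phi x with hf
  have hGbound : ∀ x : ℝ, x ≠ 0 → |∫ t in Iic x, ψ t| ≤ D * (phi x / |x|) := by
    intro x hx0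
    have habs_mono : ∀ s : Set ℝ, MeasurableSet s →
        (∫ t in s, |ψ t|) ≤ D * ∫ t in s, phi t := by
      intro s hs
      rw [← integral_const_mul]
      exact setIntegral_mono_on (hψint.abs.integrableOn)
        ((integrable_phi.const_mul D).integrableOn) hs (fun t _ => hψabs t)
    rcases lt_or_gt_of_ne hx0 with hneg | hpos
    · calc |∫ t in Iic x, ψ t| ≤ ∫ t in Iic x, |ψ t| := by
            simpa [Real.norm_eq_abs] using
              norm_integral_le_integral_norm (f := ψ) (μ := volume.restrict (Iic x))
        _ ≤ D * ∫ t in Iic x, phi t := habs_mono _ measurableSet_Iic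
        _ ≤ D * (phi x / (-x)) := mul_le_mul_of_nonneg_left (tail_bound_Iic hneg) hD0
        _ = D * (phi x / |x|) := by rw [abs_of_neg hneg]
    · have hsplit : (∫ t in Iic x, ψ t) + ∫ t in Ioi x, ψ t = ∫ t, ψ t :=
        intervalIntegral.integral_Iic_add_Ioi hψint.integrableOn hψint.integrableOn
      have hneg' : ∫ t in Iic x, ψ t = -∫ t in Ioi x, ψ t := by
        rw [hψtotal] at hsplit; linarith
      rw [hneg', abs_neg]
      calc |∫ t in Ioi x, ψ t| ≤ ∫ t in Ioi x, |ψ t| := by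
            simpa [Real.norm_eq_abs] using
              norm_integral_le_integral_norm (f := ψ) (μ := volume.restrict (Ioi x))
        _ ≤ D * ∫ t in Ioi x, phi t := habs_mono _ measurableSet_Ioi
        _ ≤ D * (phi x / x) := mul_le_mul_of_nonneg_left (tail_bound_Ioi hpos) hD0
        _ = D * (phi x / |x|) := by rw [abs_of_pos hpos]
  have hfderiv : ∀ x, HasDerivAt f (h x - c + x * f x) x := by
    intro x
    have hφ : phi x ≠ 0 := (phi_pos x).ne'
    have hd := (hasDerivAt_integral_Iic hψcont hψint x).div (hasDerivAt_phi x) hφ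
    refine hd.congr_deriv ?_
    rw [hf, hψ]
    simp only
    field_simp
    ring
  have hdiff : Differentiable ℝ f := fun x => (hfderiv x).differentiableAt
  have hfcont : Continuous f := hdiff.continuous
  have hderiv_eq : deriv f = fun x => h x - c + x * f x := funext fun x => (hfderiv x).deriv
  have hxf_bound : ∀ x, |x * f x| ≤ D := by
    intro x
    by_cases hx0 : x = 0
    · simp [hx0, hD0]
    · have hb := hGbound x hx0
      have hφpos := phi_pos x
      have hxabs : (0:ℝ) < |x| := abs_pos.2 hx0
      calc |x * f x| = |x| * (|∫ t in Iic x, ψ t| / phi x) := by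
            rw [hf]; simp only
            rw [abs_mul, abs_div, abs_of_pos hφpos]
        _ ≤ |x| * ((D * (phi x / |x|)) / phi x) := by
            gcongr
        _ = D := by field_simp
  have hderiv_cont : Continuous (deriv f) := by
    rw [hderiv_eq]
    exact (hcon.sub continuous_const).add (continuous_id.mul hfcont)
  refine ⟨f, ⟨hfcont, ∅, finite_empty, fun x _ =>
      ⟨(hfderiv x).differentiableAt, hderiv_cont.continuousAt⟩⟩, ?_, ?_⟩
  · rw [hderiv_eq]
    refine Integrable.mono' (integrable_const (D + D)) ?_ (Eventually.of_forall fun x => ?_)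
    · exact ((hcon.sub continuous_const).add (continuous_id.mul hfcont)).aestronglyMeasurable
    · rw [Real.norm_eq_abs]
      calc |h x - c + x * f x| ≤ |h x - c| + |x * f x| := abs_add_le _ _
        _ ≤ D + D := add_le_add (hbound x) (hxf_bound x)
  · intro x
    simp only [hderiv_eq, ← hc]
    ring

end SteinAux

open SteinAux

/-- Stein's lemma (characterization of the standard Gaussian): a real random
variable `W` is standard normal if and only if `E[f'(W) - W f(W)] = 0` for every
continuous, piecewise continuously differentiable `f` with `E|f'(X)| < ∞`,
where `X ~ N(0,1)`. -/
theorem stein_characterization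
    {Ω : Type*} [MeasurableSpace Ω] (P : Measure Ω) [IsProbabilityMeasure P]
    (W : Ω → ℝ) (hW : Measurable W) :
    Measure.map W P = gaussianReal 0 1 ↔
      ∀ f : ℝ → ℝ, PiecewiseC1 f → Integrable (fun x => deriv f x) (gaussianReal 0 1) →
        ∫ ω, (deriv f (W ω) - W ω * f (W ω)) ∂P = 0 := by
  constructor
  · intro hm f hf hint
    have hfm : Continuous f := hf.1
    have hmeas : AEStronglyMeasurable (fun x => deriv f x - x * f x) (Measure.map W P) := by
      exact ((measurable_deriv f).sub (measurable_id.mul hfm.measurable)).aestronglyMeasurable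
    have key : ∫ ω, (deriv f (W ω) - W ω * f (W ω)) ∂P
        = ∫ x, (deriv f x - x * f x) ∂(gaussianReal 0 1) := by
      rw [← hm, integral_map hW.aemeasurable hmeas]
    rw [key]
    by_cases hxf : Integrable (fun x => x * f x) (gaussianReal 0 1)
    · exact stein_identity hf hint hxf
    · apply integral_undef
      intro hcon
      refine hxf ((hint.sub hcon).congr (Eventually.of_forall fun x => ?_))
      simp [Pi.sub_apply]
  · intro hyp
    haveI : IsProbabilityMeasure (Measure.map W P) := Measure.isProbabilityMeasure_map hW.aemeasurable
    refine ext_of_forall_lintegral_eq_of_IsFiniteMeasure (fun fb => ?_)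
    set h : ℝ → ℝ := fun x => ((fb x : ℝ≥0) : ℝ) with hdef
    have hcon : Continuous h := NNReal.continuous_coe.comp fb.continuous
    obtain ⟨C0, hC0⟩ := fb.bounded
    have hCb : ∀ x, |h x| ≤ C0 + h 0 := by
      intro x
      have hd := hC0 x 0
      rw [NNReal.dist_eq] at hd
      have h0 : 0 ≤ h x := (fb x).2
      have h00 : 0 ≤ h 0 := (fb 0).2
      rw [abs_of_nonneg h0]
      have habs : |h x - h 0| ≤ C0 := hd
      rcases abs_le.1 habs with ⟨_, h2⟩
      linarith
    obtain ⟨f, hpc1, hfint, hfid⟩ := stein_solution hcon hCb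
    have hmain := hyp f hpc1 hfint
    simp only [hfid] at hmain
    have hWint : Integrable (fun ω => h (W ω)) P := by
      refine Integrable.mono' (integrable_const (C0 + h 0))
        ((hcon.measurable.comp hW).aestronglyMeasurable)
        (Eventually.of_forall fun ω => ?_)
      rw [Real.norm_eq_abs]; exact hCb _
    rw [integral_sub hWint (integrable_const _), integral_const] at hmain
    simp only [measure_univ, ENNReal.toReal_one, one_smul, probReal_univ] at hmain
    have heq : ∫ ω, h (W ω) ∂P = ∫ t, h t ∂(gaussianReal 0 1) := by linarith
    have hγint : Integrable h (gaussianReal 0 1) := by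
      refine Integrable.mono' (integrable_const (C0 + h 0)) hcon.aestronglyMeasurable
        (Eventually.of_forall fun t => ?_)
      rw [Real.norm_eq_abs]; exact hCb t
    have hmapint : Integrable h (Measure.map W P) := by
      rw [integrable_map_measure hcon.aestronglyMeasurable hW.aemeasurable]
      exact hWint
    rw [lintegral_coe_eq_integral _ hmapint, lintegral_coe_eq_integral _ hγint]
    congr 1
    rw [integral_map hW.aemeasurable hcon.aestronglyMeasurable]
    exact heq
end

section
/- Let g ∈ L²(μ) and h ∈ L²_s(μ²) with h ⋆₁¹ h ∈ L²(μ²) and g ⋆₁¹ h ∈ L²(μ), where (g ⋆₁¹ h)(z) = ∫_Z g(x) h(x,z) μ(dx) and (h ⋆₁¹ h)(y,z) = ∫_Z h(x,y) h(x,z) μ(dx). Then ‖g ⋆₁¹ h‖_{L²(μ)} ≤ ‖g‖_{L²(μ)} · ‖h ⋆₁¹ h‖^{1/2}_{L²(μ²)}. -/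
open MeasureTheory ENNReal

private lemma cs_aux_sq_lt_top {α : Type*} [MeasurableSpace α] {μ : Measure α} {f : α → ℝ}
    (hf : MemLp f 2 μ) : ∫⁻ a, (‖f a‖₊ : ℝ≥0∞) ^ (2:ℝ) ∂μ < ⊤ := by
  have h2 := hf.2
  rw [eLpNorm_eq_lintegral_rpow_enorm_toReal two_ne_zero ENNReal.ofNat_ne_top] at h2
  simp only [ENNReal.toReal_ofNat] at h2
  exact (ENNReal.rpow_lt_top_iff_of_pos (by norm_num)).mp h2

private lemma cs_aux_ofReal_sq (x : ℝ) : ENNReal.ofReal (x^2) = (‖x‖₊:ℝ≥0∞)^(2:ℝ) := by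
  rw [← enorm_eq_nnnorm, Real.enorm_eq_ofReal_abs, ← sq_abs x, ← Real.rpow_natCast |x| 2,
    ENNReal.ofReal_rpow_of_nonneg (abs_nonneg x) (by positivity)]
  norm_num

private lemma cs_aux_integrable_mul {α : Type*} [MeasurableSpace α] {μ : Measure α} {f k : α → ℝ}
    (hf : MemLp f 2 μ) (hk : MemLp k 2 μ) : Integrable (fun a => f a * k a) μ := by
  rw [← memLp_one_iff_integrable]
  exact hk.smul hf

private lemma cs_aux_sq_mul (a b : ℝ≥0∞) : (a * b) ^ (2:ℝ) = a ^ (2:ℝ) * b ^ (2:ℝ) :=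
  ENNReal.mul_rpow_of_nonneg _ _ (by norm_num)

private lemma cs_aux_half_sq (a : ℝ≥0∞) : (a * a) ^ ((1:ℝ)/2) = a := by
  rw [← sq, ← ENNReal.rpow_natCast a 2, ← ENNReal.rpow_mul]
  norm_num


/-- Inequality (6.2): `‖g ⋆₁¹ h‖_{L²(μ)} ≤ ‖g‖_{L²(μ)} · ‖h ⋆₁¹ h‖_{L²(μ²)}^{1/2}`,
where `(g ⋆₁¹ h)(z) = ∫ g(x) h(x,z) μ(dx)` and
`(h ⋆₁¹ h)(y,z) = ∫ h(x,y) h(x,z) μ(dx)`. -/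
theorem contraction_cauchy_schwarz
    {Z : Type*} [MeasurableSpace Z] (μ : Measure Z) [SigmaFinite μ]
    (g : Z → ℝ) (h : Z × Z → ℝ)
    (hgm : Measurable g) (hhm : Measurable h)
    (hhsym : ∀ x y : Z, h (x, y) = h (y, x))
    (hg2 : MemLp g 2 μ) (hh2 : MemLp h 2 (μ.prod μ))
    (hgh : MemLp (fun z => ∫ x, g x * h (x, z) ∂μ) 2 μ)
    (hhh : MemLp (fun yz : Z × Z => ∫ x, h (x, yz.1) * h (x, yz.2) ∂μ) 2 (μ.prod μ)) :
    eLpNorm (fun z => ∫ x, g x * h (x, z) ∂μ) 2 μ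
      ≤ eLpNorm g 2 μ *
        (eLpNorm (fun yz : Z × Z => ∫ x, h (x, yz.1) * h (x, yz.2) ∂μ) 2 (μ.prod μ))
          ^ (1 / 2 : ℝ) := by
  have h22 : Real.HolderConjugate 2 2 := Real.HolderConjugate.two_two
  set Ig := ∫⁻ a, (‖g a‖₊ : ℝ≥0∞) ^ (2:ℝ) ∂μ with hIgdef
  set Ih := ∫⁻ p : Z × Z, (‖h p‖₊ : ℝ≥0∞) ^ (2:ℝ) ∂(μ.prod μ) with hIhdef
  have hIg : Ig < ⊤ := cs_aux_sq_lt_top hg2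
  have hIh : Ih < ⊤ := cs_aux_sq_lt_top hh2
  -- measurability of squared norms
  have mg2 : Measurable fun a => (‖g a‖₊ : ℝ≥0∞) ^ (2:ℝ) := hgm.enorm.pow_const _
  have mh2 : Measurable fun p : Z × Z => (‖h p‖₊ : ℝ≥0∞) ^ (2:ℝ) := hhm.enorm.pow_const _
  -- symmetrized square integral of h
  have mhz : ∀ z : Z, Measurable fun y => (‖h (y, z)‖₊ : ℝ≥0∞) ^ (2:ℝ) := fun z => by
    fun_prop
  have hsymE : ∀ z : Z, (∫⁻ y, (‖h (y, z)‖₊ : ℝ≥0∞) ^ (2:ℝ) ∂μ)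
      = ∫⁻ y, (‖h (z, y)‖₊ : ℝ≥0∞) ^ (2:ℝ) ∂μ := fun z =>
    lintegral_congr fun y => by rw [hhsym]
  have hIh' : ∫⁻ z, ∫⁻ y, (‖h (y, z)‖₊ : ℝ≥0∞) ^ (2:ℝ) ∂μ ∂μ = Ih := by
    simp_rw [hsymE]
    exact (lintegral_prod _ mh2.aemeasurable).symm
  -- Integrability of the big triple product
  have mΦ : Measurable fun q : Z × Z × Z =>
      (g q.2.1 * h (q.2.1, q.1)) * (g q.2.2 * h (q.2.2, q.1)) := by
    fun_prop
  have mA : Measurable fun q : Z × Z × Z =>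
      (‖g q.2.1‖₊ : ℝ≥0∞) * (‖h (q.2.2, q.1)‖₊ : ℝ≥0∞) := by
    fun_prop
  have mB : Measurable fun q : Z × Z × Z =>
      (‖g q.2.2‖₊ : ℝ≥0∞) * (‖h (q.2.1, q.1)‖₊ : ℝ≥0∞) := by
    fun_prop
  have hAint : ∫⁻ q : Z × Z × Z,
      ((‖g q.2.1‖₊ : ℝ≥0∞) * (‖h (q.2.2, q.1)‖₊ : ℝ≥0∞)) ^ (2:ℝ) ∂(μ.prod (μ.prod μ))
      = Ig * Ih := by
    simp_rw [cs_aux_sq_mul]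
    rw [lintegral_prod _ (by fun_prop : Measurable fun q : Z × Z × Z =>
      (‖g q.2.1‖₊ : ℝ≥0∞) ^ (2:ℝ) * (‖h (q.2.2, q.1)‖₊ : ℝ≥0∞) ^ (2:ℝ)).aemeasurable]
    have inner : ∀ z : Z, (∫⁻ p : Z × Z,
        (‖g p.1‖₊ : ℝ≥0∞) ^ (2:ℝ) * (‖h (p.2, z)‖₊ : ℝ≥0∞) ^ (2:ℝ) ∂(μ.prod μ))
        = Ig * ∫⁻ y, (‖h (y, z)‖₊ : ℝ≥0∞) ^ (2:ℝ) ∂μ := fun z =>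
      lintegral_prod_mul mg2.aemeasurable (mhz z).aemeasurable
    simp_rw [inner]
    rw [lintegral_const_mul' _ _ hIg.ne, hIh']
  have hBint : ∫⁻ q : Z × Z × Z,
      ((‖g q.2.2‖₊ : ℝ≥0∞) * (‖h (q.2.1, q.1)‖₊ : ℝ≥0∞)) ^ (2:ℝ) ∂(μ.prod (μ.prod μ))
      = Ig * Ih := by
    simp_rw [cs_aux_sq_mul]
    rw [lintegral_prod _ (by fun_prop : Measurable fun q : Z × Z × Z =>
      (‖g q.2.2‖₊ : ℝ≥0∞) ^ (2:ℝ) * (‖h (q.2.1, q.1)‖₊ : ℝ≥0∞) ^ (2:ℝ)).aemeasurable]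
    have inner : ∀ z : Z, (∫⁻ p : Z × Z,
        (‖g p.2‖₊ : ℝ≥0∞) ^ (2:ℝ) * (‖h (p.1, z)‖₊ : ℝ≥0∞) ^ (2:ℝ) ∂(μ.prod μ))
        = (∫⁻ y, (‖h (y, z)‖₊ : ℝ≥0∞) ^ (2:ℝ) ∂μ) * Ig := fun z => by
      have : ∀ p : Z × Z, (‖g p.2‖₊ : ℝ≥0∞) ^ (2:ℝ) * (‖h (p.1, z)‖₊ : ℝ≥0∞) ^ (2:ℝ)
          = (‖h (p.1, z)‖₊ : ℝ≥0∞) ^ (2:ℝ) * (‖g p.2‖₊ : ℝ≥0∞) ^ (2:ℝ) := fun p => mul_comm _ _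
      rw [lintegral_congr this]
      exact lintegral_prod_mul (mhz z).aemeasurable mg2.aemeasurable
    simp_rw [inner]
    rw [lintegral_mul_const' _ _ hIg.ne, hIh', mul_comm]
  have hΦint : Integrable (Function.uncurry fun z (p : Z × Z) =>
      (g p.1 * h (p.1, z)) * (g p.2 * h (p.2, z))) (μ.prod (μ.prod μ)) := by
    refine ⟨(mΦ.aestronglyMeasurable : _), ?_⟩
    have hpt : ∀ q : Z × Z × Z,
        ((‖(g q.2.1 * h (q.2.1, q.1)) * (g q.2.2 * h (q.2.2, q.1))‖₊ : ℝ≥0∞))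
        = ((‖g q.2.1‖₊ : ℝ≥0∞) * (‖h (q.2.2, q.1)‖₊ : ℝ≥0∞))
          * ((‖g q.2.2‖₊ : ℝ≥0∞) * (‖h (q.2.1, q.1)‖₊ : ℝ≥0∞)) := fun q => by
      simp only [nnnorm_mul, ENNReal.coe_mul]; ring
    show (∫⁻ q, _ ∂(μ.prod (μ.prod μ))) < ⊤
    calc ∫⁻ q : Z × Z × Z,
          (‖(g q.2.1 * h (q.2.1, q.1)) * (g q.2.2 * h (q.2.2, q.1))‖₊ : ℝ≥0∞)
            ∂(μ.prod (μ.prod μ))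
        = ∫⁻ q : Z × Z × Z,
            (((‖g q.2.1‖₊ : ℝ≥0∞) * (‖h (q.2.2, q.1)‖₊ : ℝ≥0∞))
              * ((‖g q.2.2‖₊ : ℝ≥0∞) * (‖h (q.2.1, q.1)‖₊ : ℝ≥0∞)))
            ∂(μ.prod (μ.prod μ)) := lintegral_congr hpt
      _ ≤ (∫⁻ q : Z × Z × Z,
            ((‖g q.2.1‖₊ : ℝ≥0∞) * (‖h (q.2.2, q.1)‖₊ : ℝ≥0∞)) ^ (2:ℝ)
              ∂(μ.prod (μ.prod μ))) ^ ((1:ℝ)/2)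
          * (∫⁻ q : Z × Z × Z,
            ((‖g q.2.2‖₊ : ℝ≥0∞) * (‖h (q.2.1, q.1)‖₊ : ℝ≥0∞)) ^ (2:ℝ)
              ∂(μ.prod (μ.prod μ))) ^ ((1:ℝ)/2) :=
          ENNReal.lintegral_mul_le_Lp_mul_Lq _ h22 mA.aemeasurable mB.aemeasurable
      _ < ⊤ := by
          rw [hAint, hBint]
          exact ENNReal.mul_lt_top
            (ENNReal.rpow_lt_top_of_nonneg (by norm_num) (ENNReal.mul_lt_top hIg hIh).ne)
            (ENNReal.rpow_lt_top_of_nonneg (by norm_num) (ENNReal.mul_lt_top hIg hIh).ne)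
  -- Claim A: Fubini expansion
  have expand : ∀ z : Z, (∫ x, g x * h (x, z) ∂μ) ^ 2
      = ∫ p : Z × Z, (g p.1 * h (p.1, z)) * (g p.2 * h (p.2, z)) ∂(μ.prod μ) := fun z => by
    rw [sq, ← integral_prod_mul]
  have inner : ∀ p : Z × Z, (∫ z, (g p.1 * h (p.1, z)) * (g p.2 * h (p.2, z)) ∂μ)
      = (g p.1 * g p.2) * ∫ x, h (x, p.1) * h (x, p.2) ∂μ := fun p => by
    have e1 : (fun z => (g p.1 * h (p.1, z)) * (g p.2 * h (p.2, z)))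
        = fun z => (g p.1 * g p.2) * (h (p.1, z) * h (p.2, z)) := by funext z; ring
    rw [e1, integral_const_mul]
    congr 1
    have e2 : (fun x => h (x, p.1) * h (x, p.2)) = fun x => h (p.1, x) * h (p.2, x) := by
      funext x; rw [hhsym x p.1, hhsym x p.2]
    rw [e2]
  have claimA : ∫ z, (∫ x, g x * h (x, z) ∂μ) ^ 2 ∂μ
      = ∫ p : Z × Z, (g p.1 * g p.2) * (∫ x, h (x, p.1) * h (x, p.2) ∂μ) ∂(μ.prod μ) := by
    calc ∫ z, (∫ x, g x * h (x, z) ∂μ) ^ 2 ∂μ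
        = ∫ z, ∫ p : Z × Z, (g p.1 * h (p.1, z)) * (g p.2 * h (p.2, z)) ∂(μ.prod μ) ∂μ :=
          integral_congr_ae (Filter.Eventually.of_forall expand)
      _ = ∫ p : Z × Z, ∫ z, (g p.1 * h (p.1, z)) * (g p.2 * h (p.2, z)) ∂μ ∂(μ.prod μ) :=
          integral_integral_swap hΦint
      _ = ∫ p : Z × Z, (g p.1 * g p.2) * (∫ x, h (x, p.1) * h (x, p.2) ∂μ) ∂(μ.prod μ) :=
          integral_congr_ae (Filter.Eventually.of_forall inner)
  -- MemLp of the tensor g⊗g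
  have hF : MemLp (fun p : Z × Z => g p.1 * g p.2) 2 (μ.prod μ) := by
    refine ⟨((hgm.comp measurable_fst).mul (hgm.comp measurable_snd)).aestronglyMeasurable, ?_⟩
    rw [eLpNorm_eq_lintegral_rpow_enorm_toReal two_ne_zero ENNReal.ofNat_ne_top]
    simp only [ENNReal.toReal_ofNat, enorm_eq_nnnorm]
    refine ENNReal.rpow_lt_top_of_nonneg (by norm_num) ?_
    have hpt : ∀ p : Z × Z, ((‖g p.1 * g p.2‖₊ : ℝ≥0∞)) ^ (2:ℝ)
        = (‖g p.1‖₊ : ℝ≥0∞) ^ (2:ℝ) * (‖g p.2‖₊ : ℝ≥0∞) ^ (2:ℝ) := fun p => by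
      rw [nnnorm_mul, ENNReal.coe_mul, cs_aux_sq_mul]
    rw [lintegral_congr hpt, lintegral_prod_mul mg2.aemeasurable mg2.aemeasurable]
    exact (ENNReal.mul_lt_top hIg hIg).ne
  have hFsq : ∫⁻ p : Z × Z, (‖g p.1 * g p.2‖₊ : ℝ≥0∞) ^ (2:ℝ) ∂(μ.prod μ) = Ig * Ig := by
    have hpt : ∀ p : Z × Z, ((‖g p.1 * g p.2‖₊ : ℝ≥0∞)) ^ (2:ℝ)
        = (‖g p.1‖₊ : ℝ≥0∞) ^ (2:ℝ) * (‖g p.2‖₊ : ℝ≥0∞) ^ (2:ℝ) := fun p => by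
      rw [nnnorm_mul, ENNReal.coe_mul, cs_aux_sq_mul]
    rw [lintegral_congr hpt, lintegral_prod_mul mg2.aemeasurable mg2.aemeasurable]
  have hFK : Integrable (fun p : Z × Z =>
      (g p.1 * g p.2) * (∫ x, h (x, p.1) * h (x, p.2) ∂μ)) (μ.prod μ) :=
    cs_aux_integrable_mul hF hhh
  -- Main estimate in ℝ≥0∞
  have hKnorm : eLpNorm (fun yz : Z × Z => ∫ x, h (x, yz.1) * h (x, yz.2) ∂μ) 2 (μ.prod μ)
      = (∫⁻ p : Z × Z, (‖∫ x, h (x, p.1) * h (x, p.2) ∂μ‖₊ : ℝ≥0∞) ^ (2:ℝ) ∂(μ.prod μ))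
        ^ ((1:ℝ)/2) := by
    rw [eLpNorm_eq_lintegral_rpow_enorm_toReal two_ne_zero ENNReal.ofNat_ne_top]
    norm_num
    rfl
  have hmain : ∫⁻ z, (‖∫ x, g x * h (x, z) ∂μ‖₊ : ℝ≥0∞) ^ (2:ℝ) ∂μ
      ≤ Ig * eLpNorm (fun yz : Z × Z => ∫ x, h (x, yz.1) * h (x, yz.2) ∂μ) 2 (μ.prod μ) := by
    calc ∫⁻ z, (‖∫ x, g x * h (x, z) ∂μ‖₊ : ℝ≥0∞) ^ (2:ℝ) ∂μ
        = ENNReal.ofReal (∫ z, (∫ x, g x * h (x, z) ∂μ) ^ 2 ∂μ) := by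
          rw [ofReal_integral_eq_lintegral_ofReal hgh.integrable_sq
            (Filter.Eventually.of_forall fun z => sq_nonneg _)]
          exact lintegral_congr fun z => (cs_aux_ofReal_sq _).symm
      _ = ENNReal.ofReal (∫ p : Z × Z,
            (g p.1 * g p.2) * (∫ x, h (x, p.1) * h (x, p.2) ∂μ) ∂(μ.prod μ)) := by
          rw [claimA]
      _ ≤ ENNReal.ofReal (∫ p : Z × Z,
            |(g p.1 * g p.2) * (∫ x, h (x, p.1) * h (x, p.2) ∂μ)| ∂(μ.prod μ)) := by
          refine ENNReal.ofReal_le_ofReal ?_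
          calc ∫ p : Z × Z, (g p.1 * g p.2) * (∫ x, h (x, p.1) * h (x, p.2) ∂μ) ∂(μ.prod μ)
              ≤ |∫ p : Z × Z, (g p.1 * g p.2) * (∫ x, h (x, p.1) * h (x, p.2) ∂μ) ∂(μ.prod μ)| :=
                le_abs_self _
            _ = ‖∫ p : Z × Z, (g p.1 * g p.2) * (∫ x, h (x, p.1) * h (x, p.2) ∂μ) ∂(μ.prod μ)‖ :=
                (Real.norm_eq_abs _).symm
            _ ≤ ∫ p : Z × Z, ‖(g p.1 * g p.2) * (∫ x, h (x, p.1) * h (x, p.2) ∂μ)‖ ∂(μ.prod μ) :=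
                norm_integral_le_integral_norm _
            _ = ∫ p : Z × Z, |(g p.1 * g p.2) * (∫ x, h (x, p.1) * h (x, p.2) ∂μ)| ∂(μ.prod μ) :=
                by simp only [Real.norm_eq_abs]
      _ = ∫⁻ p : Z × Z, (‖g p.1 * g p.2‖₊ : ℝ≥0∞)
            * (‖∫ x, h (x, p.1) * h (x, p.2) ∂μ‖₊ : ℝ≥0∞) ∂(μ.prod μ) := by
          rw [ofReal_integral_eq_lintegral_ofReal hFK.abs
            (Filter.Eventually.of_forall fun p => abs_nonneg _)]
          exact lintegral_congr fun p => by
            rw [abs_mul, ENNReal.ofReal_mul (abs_nonneg _), ← Real.enorm_eq_ofReal_abs,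
              ← Real.enorm_eq_ofReal_abs]
            rfl
      _ ≤ (∫⁻ p : Z × Z, (‖g p.1 * g p.2‖₊ : ℝ≥0∞) ^ (2:ℝ) ∂(μ.prod μ)) ^ ((1:ℝ)/2)
          * (∫⁻ p : Z × Z, (‖∫ x, h (x, p.1) * h (x, p.2) ∂μ‖₊ : ℝ≥0∞) ^ (2:ℝ) ∂(μ.prod μ))
            ^ ((1:ℝ)/2) :=
          ENNReal.lintegral_mul_le_Lp_mul_Lq _ h22
            (hF.aestronglyMeasurable.aemeasurable.enorm)
            (hhh.aestronglyMeasurable.aemeasurable.enorm)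
      _ = Ig * eLpNorm (fun yz : Z × Z => ∫ x, h (x, yz.1) * h (x, yz.2) ∂μ) 2 (μ.prod μ) := by
          rw [hFsq, cs_aux_half_sq, hKnorm]
  -- Conclusion
  have hTnorm : eLpNorm (fun z => ∫ x, g x * h (x, z) ∂μ) 2 μ
      = (∫⁻ z, (‖∫ x, g x * h (x, z) ∂μ‖₊ : ℝ≥0∞) ^ (2:ℝ) ∂μ) ^ ((1:ℝ)/2) := by
    rw [eLpNorm_eq_lintegral_rpow_enorm_toReal two_ne_zero ENNReal.ofNat_ne_top]
    norm_num
    rfl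
  have hgnorm : eLpNorm g 2 μ = Ig ^ ((1:ℝ)/2) := by
    rw [eLpNorm_eq_lintegral_rpow_enorm_toReal two_ne_zero ENNReal.ofNat_ne_top, hIgdef]
    norm_num
    rfl
  rw [hTnorm, hgnorm]
  calc (∫⁻ z, (‖∫ x, g x * h (x, z) ∂μ‖₊ : ℝ≥0∞) ^ (2:ℝ) ∂μ) ^ ((1:ℝ)/2)
      ≤ (Ig * eLpNorm (fun yz : Z × Z => ∫ x, h (x, yz.1) * h (x, yz.2) ∂μ) 2 (μ.prod μ))
          ^ ((1:ℝ)/2) := ENNReal.rpow_le_rpow hmain (by norm_num)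
    _ = Ig ^ ((1:ℝ)/2)
        * (eLpNorm (fun yz : Z × Z => ∫ x, h (x, yz.1) * h (x, yz.2) ∂μ) 2 (μ.prod μ))
          ^ ((1:ℝ)/2) := ENNReal.mul_rpow_of_nonneg _ _ (by norm_num)
    _ = Ig ^ ((1:ℝ)/2)
        * (eLpNorm (fun yz : Z × Z => ∫ x, h (x, yz.1) * h (x, yz.2) ∂μ) 2 (μ.prod μ))
          ^ (1 / 2 : ℝ) := by norm_num
end
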